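/- For P-almost every b ∈ {0,1}^∞ there exists a point θ(b) ∈ [0,1] such that lim_{n→∞} p_{b^n}(z) = 0 for every z ∈ [0, θ(b)) and lim_{n→∞} p_{b^n}(z) = 1 for every z ∈ (θ(b), 1]. Moreover, the thus constructed random variable θ is uniformly distributed on [0,1]: for every t ∈ [0,1], P({b : θ(b) ≤ t}) = t. -/

import Mathlib

open Filter Set MeasureTheory

noncomputable section

/-- `g_0(z) = 2z - z²` (bit `false`), `g_1(z) = z²` (bit `true`). -/
def gBit (c : Bool) (z : ℝ) : ℝ := if c then z ^ 2 else 2 * z - z ^ 2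

/-- `pPre b n z = g_{b_n}(g_{b_{n-1}}(⋯ g_{b_1}(z) ⋯))`, where `b_i` is `b (i-1)`. -/
def pPre (b : ℕ → Bool) : ℕ → ℝ → ℝ
  | 0, z => z
  | n + 1, z => gBit (b n) (pPre b n z)

/-- `f(b) = Σ_{n ≥ 1} b_n 2^{-n}`. -/
def fBin (b : ℕ → Bool) : ℝ := ∑' n : ℕ, (if b n then (1 : ℝ) else 0) / 2 ^ (n + 1)

/-- The dyadic rationals in `[0,1]`. -/
def dyadics : Set ℝ := Set.Icc 0 1 ∩ {x : ℝ | ∃ (p : ℤ) (n : ℕ), x = (p : ℝ) / 2 ^ n}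

/-- The good channels of a BEC with erasure probability `ε`: `x ∈ [0,1]` such that some binary
expansion `b` of `x` satisfies `p_{b^n}(ε) → 0`. -/
def Gset (ε : ℝ) : Set ℝ :=
  {x : ℝ | ∃ b : ℕ → Bool, fBin b = x ∧ Tendsto (fun n => pPre b n ε) atTop (nhds 0)}

/-- The bad channels of a BEC with erasure probability `ε`: `x ∈ [0,1]` such that some binary
expansion `b` of `x` satisfies `p_{b^n}(ε) → 1`. -/
def Bset (ε : ℝ) : Set ℝ :=
  {x : ℝ | ∃ b : ℕ → Bool, fBin b = x ∧ Tendsto (fun n => pPre b n ε) atTop (nhds 1)}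

/-- Hamming weight `w(b^n)` of the length-`n` prefix of `b`. -/
def wPre (b : ℕ → Bool) (n : ℕ) : ℕ := ∑ i ∈ Finset.range n, (if b i then 1 else 0)

/-- `b` is `ρ`-heavy: `liminf_{n→∞} (w(b^n) - nρ) ≥ 0` (the liminf computed in `EReal`),
equivalently `liminf 2^{w(b^n)} / 2^{nρ} ≥ 1`. -/
def Heavy (ρ : ℝ) (b : ℕ → Bool) : Prop :=
  0 ≤ atTop.liminf (fun n : ℕ => (((wPre b n : ℝ) - n * ρ : ℝ) : EReal))

/-- The set of `ρ`-heavy channels. -/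
def Hset (ρ : ℝ) : Set ℝ := {x : ℝ | ∃ b : ℕ → Bool, fBin b = x ∧ Heavy ρ b}


lemma gBit_true (z : ℝ) : gBit true z = z ^ 2 := rfl
lemma gBit_false (z : ℝ) : gBit false z = 2 * z - z ^ 2 := rfl

lemma gBit_mem {c : Bool} {z : ℝ} (h : z ∈ Icc (0:ℝ) 1) : gBit c z ∈ Icc (0:ℝ) 1 := by
  obtain ⟨h0, h1⟩ := h
  cases c <;> rw [mem_Icc] <;> constructor <;>
    simp only [gBit_true, gBit_false] <;> nlinarith

lemma gBit_mono {c : Bool} {z z' : ℝ} (h0 : 0 ≤ z) (h : z ≤ z') (h1 : z' ≤ 1) :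
    gBit c z ≤ gBit c z' := by
  cases c <;> simp only [gBit_true, gBit_false] <;> nlinarith

lemma pPre_mem {b : ℕ → Bool} {z : ℝ} (h : z ∈ Icc (0:ℝ) 1) (n : ℕ) :
    pPre b n z ∈ Icc (0:ℝ) 1 := by
  induction n with
  | zero => exact h
  | succ n ih => exact gBit_mem ih

lemma pPre_mono {b : ℕ → Bool} {z z' : ℝ} (h0 : 0 ≤ z) (h : z ≤ z') (h1 : z' ≤ 1) (n : ℕ) :
    pPre b n z ≤ pPre b n z' := by
  induction n with
  | zero => exact h
  | succ n ih =>
    exact gBit_mono (pPre_mem ⟨h0, h.trans h1⟩ n).1 ih (pPre_mem ⟨h0.trans h, h1⟩ n).2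

lemma pPre_congr {b c : ℕ → Bool} {n : ℕ} (h : ∀ i < n, b i = c i) (z : ℝ) :
    pPre b n z = pPre c n z := by
  induction n with
  | zero => rfl
  | succ n ih =>
    show gBit (b n) _ = gBit (c n) _
    rw [h n n.lt_succ_self, ih fun i hi => h i (hi.trans n.lt_succ_self)]

lemma pPre_succ_dist {b : ℕ → Bool} {z : ℝ} (h : z ∈ Icc (0:ℝ) 1) (n : ℕ) :
    dist (pPre b n z) (pPre b (n+1) z) = pPre b n z * (1 - pPre b n z) := by
  obtain ⟨h0, h1⟩ := pPre_mem h n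
  show |pPre b n z - gBit (b n) (pPre b n z)| = _
  cases hb : b n
  · rw [gBit_false, abs_of_nonpos (by nlinarith)]; ring
  · rw [gBit_true, abs_of_nonneg (by nlinarith)]; ring

lemma sqrt_contract {x : ℝ} (h : x ∈ Icc (0:ℝ) 1) :
    Real.sqrt (gBit false x * (1 - gBit false x)) + Real.sqrt (gBit true x * (1 - gBit true x))
      ≤ Real.sqrt 3 * Real.sqrt (x * (1 - x)) := by
  obtain ⟨h0, h1⟩ := h
  set u := x * (1 - x) with hu
  have hu0 : 0 ≤ u := by rw [hu]; nlinarith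
  have hu4 : u ≤ 1/4 := by rw [hu]; nlinarith [sq_nonneg (2*x - 1)]
  have ha : (0:ℝ) ≤ (2 - x) * (1 - x) := by nlinarith
  have hb : (0:ℝ) ≤ x * (1 + x) := by nlinarith
  have e1 : gBit false x * (1 - gBit false x) = ((2 - x) * (1 - x)) * u := by
    simp only [gBit_false, hu]; ring
  have e2 : gBit true x * (1 - gBit true x) = (x * (1 + x)) * u := by
    simp only [gBit_true, hu]; ring
  rw [e1, e2, Real.sqrt_mul ha u, Real.sqrt_mul hb u, ← add_mul]
  gcongr ?_ * _
  have hab : Real.sqrt ((2 - x) * (1 - x)) * Real.sqrt (x * (1 + x))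
      = Real.sqrt (u * (2 + u)) := by
    rw [← Real.sqrt_mul ha]; congr 1; rw [hu]; ring
  have hs : Real.sqrt (u * (2 + u)) ≤ (1 + 2*u)/2 := by
    rw [show (1 + 2*u)/2 = Real.sqrt (((1 + 2*u)/2)^2) from
      (Real.sqrt_sq (by nlinarith)).symm]
    apply Real.sqrt_le_sqrt; nlinarith
  have key : (Real.sqrt ((2 - x) * (1 - x)) + Real.sqrt (x * (1 + x)))^2 ≤ 3 := by
    have expand : (Real.sqrt ((2 - x) * (1 - x)) + Real.sqrt (x * (1 + x)))^2
        = (2 - x) * (1 - x) + x * (1 + x)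
          + 2 * (Real.sqrt ((2 - x) * (1 - x)) * Real.sqrt (x * (1 + x))) := by
      rw [add_sq, Real.sq_sqrt ha, Real.sq_sqrt hb]; ring
    rw [expand, hab]
    have h2 : (2 - x) * (1 - x) + x * (1 + x) = 2 * (1 - u) := by rw [hu]; ring
    rw [h2]; nlinarith [hs]
  calc Real.sqrt ((2 - x) * (1 - x)) + Real.sqrt (x * (1 + x))
      = Real.sqrt ((Real.sqrt ((2 - x) * (1 - x)) + Real.sqrt (x * (1 + x)))^2) := by
        rw [Real.sqrt_sq (by positivity)]
    _ ≤ Real.sqrt 3 := Real.sqrt_le_sqrt key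

lemma pPre_shift (b : ℕ → Bool) (n : ℕ) (z : ℝ) :
    pPre b (n+1) z = pPre (fun i => b (i+1)) n (gBit (b 0) z) := by
  induction n with
  | zero => rfl
  | succ n ih =>
    show gBit (b (n+1)) (pPre b (n+1) z) = gBit (b (n+1)) _
    rw [ih]

def extFin (n : ℕ) (s : Fin n → Bool) : ℕ → Bool :=
  fun i => if h : i < n then s ⟨i, h⟩ else false

lemma pPre_extFin_cons (n : ℕ) (s : Fin n → Bool) (c : Bool) (z : ℝ) :
    pPre (extFin (n+1) (Fin.cons c s)) (n+1) z = pPre (extFin n s) n (gBit c z) := by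
  rw [pPre_shift]
  have h0 : extFin (n+1) (Fin.cons c s) 0 = c := by
    unfold extFin
    rw [dif_pos (Nat.zero_lt_succ n)]
    rfl
  rw [h0]
  apply pPre_congr
  intro i hi
  show extFin (n+1) (Fin.cons c s) (i+1) = extFin n s i
  unfold extFin
  rw [dif_pos (Nat.succ_lt_succ hi), dif_pos hi]
  exact Fin.cons_succ (α := fun _ : Fin (n+1) => Bool) c s ⟨i, hi⟩

lemma sum_succ (F : ℝ → ℝ) (n : ℕ) (z : ℝ) :
    ∑ s : Fin (n+1) → Bool, F (pPre (extFin (n+1) s) (n+1) z)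
      = (∑ s : Fin n → Bool, F (pPre (extFin n s) n (gBit true z)))
        + ∑ s : Fin n → Bool, F (pPre (extFin n s) n (gBit false z)) := by
  rw [← Fintype.sum_equiv (Fin.consEquiv (fun _ : Fin (n+1) => Bool))
    (fun p : Bool × (Fin n → Bool) => F (pPre (extFin (n+1) (Fin.cons p.1 p.2)) (n+1) z))
    (fun s => F (pPre (extFin (n+1) s) (n+1) z)) (fun p => rfl)]
  rw [Fintype.sum_prod_type, Fintype.sum_bool]
  congr 1 <;> exact Finset.sum_congr rfl fun s _ => by rw [pPre_extFin_cons]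

lemma sum_sqrt_le (n : ℕ) : ∀ z ∈ Icc (0:ℝ) 1,
    ∑ s : Fin n → Bool, Real.sqrt (pPre (extFin n s) n z * (1 - pPre (extFin n s) n z))
      ≤ Real.sqrt 3 ^ n * Real.sqrt (z * (1 - z)) := by
  induction n with
  | zero => intro z _; simp [pPre]
  | succ n ih =>
    intro z hz
    rw [sum_succ (fun x => Real.sqrt (x * (1 - x)))]
    have h1 := ih _ (gBit_mem (c := true) hz)
    have h0 := ih _ (gBit_mem (c := false) hz)
    have hc := sqrt_contract hz
    have h3 : (0:ℝ) ≤ Real.sqrt 3 ^ n := by positivity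
    calc _ ≤ Real.sqrt 3 ^ n * Real.sqrt (gBit true z * (1 - gBit true z))
            + Real.sqrt 3 ^ n * Real.sqrt (gBit false z * (1 - gBit false z)) := by
            exact add_le_add h1 h0
      _ = Real.sqrt 3 ^ n * (Real.sqrt (gBit false z * (1 - gBit false z))
            + Real.sqrt (gBit true z * (1 - gBit true z))) := by ring
      _ ≤ Real.sqrt 3 ^ n * (Real.sqrt 3 * Real.sqrt (z * (1 - z))) := by
            exact mul_le_mul_of_nonneg_left hc h3
      _ = Real.sqrt 3 ^ (n+1) * Real.sqrt (z * (1 - z)) := by ring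

lemma sum_id (n : ℕ) : ∀ z : ℝ,
    ∑ s : Fin n → Bool, pPre (extFin n s) n z = 2 ^ n * z := by
  induction n with
  | zero => intro z; simp [pPre]
  | succ n ih =>
    intro z
    rw [sum_succ (fun x => x), ih, ih]
    simp only [gBit_true, gBit_false]
    ring

def cyl (n : ℕ) (c : ℕ → Bool) : Set (ℕ → Bool) := {b | ∀ i < n, b i = c i}

lemma measurableSet_cyl (n : ℕ) (c : ℕ → Bool) : MeasurableSet (cyl n c) := by
  have : cyl n c = ⋂ i ∈ Finset.range n, {b : ℕ → Bool | b i = c i} := by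
    ext b; simp [cyl]
  rw [this]
  refine MeasurableSet.biInter (Finset.range n).countable_toSet fun i _ => ?_
  have : {b : ℕ → Bool | b i = c i} = (fun b : ℕ → Bool => b i) ⁻¹' {c i} := rfl
  rw [this]
  exact (measurable_pi_apply i) (measurableSet_singleton (c i))

lemma mem_cyl_self (n : ℕ) (b : ℕ → Bool) : b ∈ cyl n (extFin n (fun i : Fin n => b i)) := by
  intro i hi; simp [extFin, dif_pos hi]

lemma pPre_of_mem_cyl {n : ℕ} {b c : ℕ → Bool} (h : b ∈ cyl n c) (z : ℝ) :
    pPre b n z = pPre c n z := pPre_congr h z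

lemma cyl_disjoint {n : ℕ} {s s' : Fin n → Bool} (h : s ≠ s') :
    Disjoint (cyl n (extFin n s)) (cyl n (extFin n s')) := by
  rw [Set.disjoint_left]
  intro b hb hb'
  apply h
  funext i
  have h1 := hb i i.2
  have h2 := hb' i i.2
  simp only [extFin, dif_pos i.2] at h1 h2
  rw [← h1, ← h2]

section Meas
variable (P : Measure (ℕ → Bool)) [IsProbabilityMeasure P]
variable (hP : ∀ (c : ℕ → Bool) (n : ℕ),
      P {b : ℕ → Bool | ∀ i < n, b i = c i} = (2 : ENNReal)⁻¹ ^ n)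
include hP

open scoped Classical in
lemma P_event (Q : ℝ → Prop) (n : ℕ) (z : ℝ) :
    P {b | Q (pPre b n z)} =
      (Finset.univ.filter fun s : Fin n → Bool => Q (pPre (extFin n s) n z)).card
        * (2 : ENNReal)⁻¹ ^ n := by
  have hev : {b : ℕ → Bool | Q (pPre b n z)} =
      ⋃ s ∈ Finset.univ.filter (fun s : Fin n → Bool => Q (pPre (extFin n s) n z)),
        cyl n (extFin n s) := by
    ext b
    simp only [mem_setOf_eq, Set.mem_iUnion, Finset.mem_filter, Finset.mem_univ, true_and,
      exists_prop]
    constructor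
    · intro hQ
      refine ⟨fun i => b i, ?_, mem_cyl_self n b⟩
      rwa [← pPre_of_mem_cyl (mem_cyl_self n b) z]
    · rintro ⟨s, hs, hb⟩
      rwa [pPre_of_mem_cyl hb z]
  rw [hev, measure_biUnion_finset ?_ (fun s _ => measurableSet_cyl n (extFin n s))]
  · have hc : ∀ s : Fin n → Bool, P (cyl n (extFin n s)) = (2 : ENNReal)⁻¹ ^ n :=
      fun s => hP (extFin n s) n
    rw [Finset.sum_congr rfl (fun s _ => hc s), Finset.sum_const, nsmul_eq_mul]
  · intro s _ s' _ hne
    exact cyl_disjoint hne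

lemma P_markov (n : ℕ) {z : ℝ} (hz : z ∈ Icc (0:ℝ) 1) {ε : ℝ} (hε : 0 < ε) :
    P {b | ε ≤ Real.sqrt (pPre b n z * (1 - pPre b n z))}
      ≤ ENNReal.ofReal ((Real.sqrt 3 ^ n / ε) * (2⁻¹ : ℝ) ^ n) := by
  classical
  rw [P_event P hP (fun x => ε ≤ Real.sqrt (x * (1 - x))) n z]
  set bad := Finset.univ.filter
    (fun s : Fin n → Bool => ε ≤ Real.sqrt (pPre (extFin n s) n z * (1 - pPre (extFin n s) n z)))
    with hbad
  have hcard : (bad.card : ℝ) ≤ Real.sqrt 3 ^ n / ε := by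
    rw [le_div_iff₀ hε]
    calc (bad.card : ℝ) * ε
        ≤ ∑ s ∈ bad, Real.sqrt (pPre (extFin n s) n z * (1 - pPre (extFin n s) n z)) := by
          rw [← nsmul_eq_mul, ← Finset.sum_const]
          exact Finset.sum_le_sum fun s hs => (Finset.mem_filter.1 hs).2
      _ ≤ ∑ s : Fin n → Bool, Real.sqrt (pPre (extFin n s) n z * (1 - pPre (extFin n s) n z)) :=
          Finset.sum_le_sum_of_subset_of_nonneg (Finset.filter_subset _ _)
            (fun s _ _ => Real.sqrt_nonneg _)
      _ ≤ Real.sqrt 3 ^ n * Real.sqrt (z * (1 - z)) := sum_sqrt_le n z hz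
      _ ≤ Real.sqrt 3 ^ n * 1 := by
          gcongr
          exact Real.sqrt_le_one.mpr (by nlinarith [hz.1, hz.2])
      _ = Real.sqrt 3 ^ n := mul_one _
  have h2 : ((2 : ENNReal)⁻¹) ^ n = ENNReal.ofReal ((2⁻¹ : ℝ) ^ n) := by
    rw [ENNReal.ofReal_pow (by norm_num)]
    congr 1
    rw [ENNReal.ofReal_inv_of_pos (by norm_num)]
    norm_num
  rw [h2, ENNReal.ofReal_mul (by positivity)]
  gcongr
  calc (bad.card : ENNReal) = ENNReal.ofReal (bad.card : ℝ) := by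
        rw [ENNReal.ofReal_natCast]
    _ ≤ ENNReal.ofReal (Real.sqrt 3 ^ n / ε) := ENNReal.ofReal_le_ofReal hcard

lemma integral_pPre (n : ℕ) (z : ℝ) : ∫ b, pPre b n z ∂P = z := by
  classical
  have hdecomp : (fun b : ℕ → Bool => pPre b n z) = fun b =>
      ∑ s : Fin n → Bool, (cyl n (extFin n s)).indicator
        (fun _ => pPre (extFin n s) n z) b := by
    funext b
    rw [Finset.sum_eq_single (fun i : Fin n => b i)]
    · rw [indicator_of_mem (mem_cyl_self n b)]
      exact pPre_of_mem_cyl (mem_cyl_self n b) z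
    · intro s _ hne
      rw [indicator_of_notMem]
      intro hb
      apply hne
      funext i
      have := hb i i.2
      unfold extFin at this
      rw [dif_pos i.2] at this
      exact this.symm
    · intro h; exact absurd (Finset.mem_univ _) h
  rw [hdecomp, integral_finset_sum _
    (fun s _ => (integrable_const _).indicator (measurableSet_cyl n (extFin n s)))]
  have hint : ∀ s : Fin n → Bool,
      ∫ b, (cyl n (extFin n s)).indicator (fun _ => pPre (extFin n s) n z) b ∂P
        = (2⁻¹ : ℝ) ^ n * pPre (extFin n s) n z := by
    intro s
    rw [integral_indicator_const _ (measurableSet_cyl n (extFin n s))]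
    have : P (cyl n (extFin n s)) = (2 : ENNReal)⁻¹ ^ n := hP (extFin n s) n
    rw [measureReal_def, this, smul_eq_mul]
    congr 1
    rw [ENNReal.toReal_pow, ENNReal.toReal_inv]
    norm_num
  rw [Finset.sum_congr rfl (fun s _ => hint s), ← Finset.mul_sum, sum_id n z]
  rw [← mul_assoc, ← mul_pow]
  norm_num

end Meas

lemma measurable_pPre (n : ℕ) (z : ℝ) : Measurable (fun b : ℕ → Bool => pPre b n z) := by
  induction n with
  | zero => exact measurable_const
  | succ n ih =>
    have heq : (fun b : ℕ → Bool => pPre b (n+1) z) = fun b =>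
        if b n = true then (pPre b n z) ^ 2 else 2 * (pPre b n z) - (pPre b n z) ^ 2 := by
      funext b
      show gBit (b n) (pPre b n z) = _
      cases hb : b n <;> simp [gBit, hb]
    rw [heq]
    have hcond : MeasurableSet {b : ℕ → Bool | b n = true} := by
      have : {b : ℕ → Bool | b n = true} = (fun b : ℕ → Bool => b n) ⁻¹' {true} := rfl
      rw [this]
      exact (measurable_pi_apply n) (measurableSet_singleton true)
    exact Measurable.ite hcond (ih.pow_const 2) (((measurable_const.mul ih)).sub (ih.pow_const 2))

section Meas2
variable (P : Measure (ℕ → Bool)) [IsProbabilityMeasure P]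
variable (hP : ∀ (c : ℕ → Bool) (n : ℕ),
      P {b : ℕ → Bool | ∀ i < n, b i = c i} = (2 : ENNReal)⁻¹ ^ n)

lemma sqrt3_lt : Real.sqrt 3 * 5 / 9 < 1 := by
  have h : Real.sqrt 3 < 9/5 := by
    rw [show (9/5 : ℝ) = Real.sqrt ((9/5)^2) from (Real.sqrt_sq (by norm_num)).symm]
    exact Real.sqrt_lt_sqrt (by norm_num) (by norm_num)
  linarith

include hP

lemma ae_dichotomy {z : ℝ} (hz : z ∈ Icc (0:ℝ) 1) :
    ∀ᵐ b ∂P, Tendsto (fun n => pPre b n z) atTop (nhds 0)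
      ∨ Tendsto (fun n => pPre b n z) atTop (nhds 1) := by
  set s : ℕ → Set (ℕ → Bool) :=
    fun n => {b | (9/10:ℝ)^n ≤ Real.sqrt (pPre b n z * (1 - pPre b n z))} with hs
  have hr0 : (0:ℝ) ≤ Real.sqrt 3 * 5 / 9 := by positivity
  have hsum : ∑' n, P (s n) ≠ ⊤ := by
    have hb : ∀ n, P (s n) ≤ ENNReal.ofReal ((Real.sqrt 3 * 5 / 9)^n) := by
      intro n
      refine (P_markov P hP n hz (by positivity : (0:ℝ) < (9/10)^n)).trans ?_
      apply ENNReal.ofReal_le_ofReal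
      refine le_of_eq ?_
      rw [← div_pow, ← mul_pow]
      congr 1
      ring
    refine ne_top_of_le_ne_top ?_ (ENNReal.tsum_le_tsum hb)
    rw [← ENNReal.ofReal_tsum_of_nonneg (fun n => by positivity)
      (summable_geometric_of_lt_one hr0 sqrt3_lt)]
    exact ENNReal.ofReal_ne_top
  filter_upwards [MeasureTheory.ae_eventually_notMem hsum] with b hb
  have hu0 : ∀ n, 0 ≤ pPre b n z * (1 - pPre b n z) := by
    intro n
    obtain ⟨ha, hb'⟩ := pPre_mem hz n
    nlinarith
  have hue : ∀ᶠ n in atTop, pPre b n z * (1 - pPre b n z) ≤ (9/10:ℝ)^n := by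
    filter_upwards [hb] with n hn
    have h1 : Real.sqrt (pPre b n z * (1 - pPre b n z)) < (9/10:ℝ)^n := lt_of_not_ge hn
    calc pPre b n z * (1 - pPre b n z)
        = Real.sqrt (pPre b n z * (1 - pPre b n z))
          * Real.sqrt (pPre b n z * (1 - pPre b n z)) := (Real.mul_self_sqrt (hu0 n)).symm
      _ ≤ (9/10:ℝ)^n * (9/10:ℝ)^n :=
          mul_le_mul h1.le h1.le (Real.sqrt_nonneg _) (by positivity)
      _ = ((81:ℝ)/100)^n := by rw [← mul_pow]; norm_num
      _ ≤ (9/10:ℝ)^n := pow_le_pow_left₀ (by norm_num) (by norm_num) n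
  have hsummable : Summable (fun n => pPre b n z * (1 - pPre b n z)) := by
    obtain ⟨N, hN⟩ := eventually_atTop.1 hue
    rw [← summable_nat_add_iff N]
    apply Summable.of_nonneg_of_le (fun n => hu0 (n + N)) (fun n => hN (n + N) (by omega))
    have : Summable (fun n : ℕ => (9/10:ℝ)^N * (9/10:ℝ)^n) :=
      (summable_geometric_of_lt_one (by norm_num) (by norm_num)).mul_left _
    refine this.congr fun n => ?_
    rw [← pow_add]
    congr 1
    omega
  have hcauchy : CauchySeq (fun n => pPre b n z) :=
    cauchySeq_of_dist_le_of_summable _ (fun n => le_of_eq (pPre_succ_dist hz n)) hsummable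
  obtain ⟨L, hL⟩ := cauchySeq_tendsto_of_complete hcauchy
  have hu_tendsto : Tendsto (fun n => pPre b n z * (1 - pPre b n z)) atTop (nhds 0) :=
    squeeze_zero' (Eventually.of_forall hu0) hue
      (tendsto_pow_atTop_nhds_zero_of_lt_one (by norm_num) (by norm_num))
  have hLprod : Tendsto (fun n => pPre b n z * (1 - pPre b n z)) atTop (nhds (L * (1 - L))) :=
    hL.mul (tendsto_const_nhds.sub hL)
  have hzero : L * (1 - L) = 0 := tendsto_nhds_unique hLprod hu_tendsto
  rcases mul_eq_zero.1 hzero with h | h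
  · exact Or.inl (h ▸ hL)
  · have : L = 1 := by linarith [sub_eq_zero.1 h]
    exact Or.inr (this ▸ hL)

lemma P_Aset {z : ℝ} (hz : z ∈ Icc (0:ℝ) 1) :
    P {b : ℕ → Bool | Tendsto (fun n => pPre b n z) atTop (nhds 1)} = ENNReal.ofReal z := by
  set A := {b : ℕ → Bool | Tendsto (fun n => pPre b n z) atTop (nhds 1)} with hA
  have hAm : MeasurableSet A := measurableSet_tendsto _ (fun n => measurable_pPre n z)
  have hdc : Tendsto (fun n => ∫ b, pPre b n z ∂P) atTop
      (nhds (∫ b, A.indicator (fun _ => (1:ℝ)) b ∂P)) := by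
    apply MeasureTheory.tendsto_integral_of_dominated_convergence (fun _ => (1:ℝ))
    · exact fun n => (measurable_pPre n z).aestronglyMeasurable
    · exact integrable_const 1
    · intro n
      apply Eventually.of_forall
      intro b
      rw [Real.norm_eq_abs, abs_of_nonneg (pPre_mem hz n).1]
      exact (pPre_mem hz n).2
    · filter_upwards [ae_dichotomy P hP hz] with b hbd
      by_cases hbA : b ∈ A
      · rw [indicator_of_mem hbA]
        exact hbA
      · rw [indicator_of_notMem hbA]
        rcases hbd with h | h
        · exact h
        · exact absurd h hbA
  have h1 : (fun n => ∫ b, pPre b n z ∂P) = fun _ => z := funext fun n => integral_pPre P hP n z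
  rw [h1] at hdc
  have h2 : ∫ b, A.indicator (fun _ => (1:ℝ)) b ∂P = (P A).toReal := by
    rw [integral_indicator_const (1:ℝ) hAm, smul_eq_mul, mul_one, measureReal_def]
  have h3 : (P A).toReal = z := by
    rw [← h2]
    exact (tendsto_nhds_unique tendsto_const_nhds hdc).symm ▸ rfl
  rw [← h3, ENNReal.ofReal_toReal (measure_ne_top P A)]

end Meas2

/-- For `P`-almost every `b` there is a threshold `θ(b) ∈ [0,1]` with `p_{b^n}(z) → 0` for
`z ∈ [0, θ(b))` and `p_{b^n}(z) → 1` for `z ∈ (θ(b), 1]`; moreover `θ` is uniformly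
distributed on `[0,1]`. -/
theorem polar_threshold (P : Measure (ℕ → Bool)) [IsProbabilityMeasure P]
    (hP : ∀ (c : ℕ → Bool) (n : ℕ),
      P {b : ℕ → Bool | ∀ i < n, b i = c i} = (2 : ENNReal)⁻¹ ^ n) :
    ∃ θ : (ℕ → Bool) → ℝ, (∀ b, θ b ∈ Set.Icc (0 : ℝ) 1) ∧
      (∀ᵐ b ∂P,
        (∀ z ∈ Set.Ico (0 : ℝ) (θ b), Tendsto (fun n => pPre b n z) atTop (nhds 0)) ∧
        (∀ z ∈ Set.Ioc (θ b) (1 : ℝ), Tendsto (fun n => pPre b n z) atTop (nhds 1))) ∧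
      (∀ t ∈ Set.Icc (0 : ℝ) 1, P {b : ℕ → Bool | θ b ≤ t} = ENNReal.ofReal t) := by
  classical
  set S : (ℕ → Bool) → Set ℝ := fun b =>
    insert 0 {x | x ∈ Icc (0:ℝ) 1 ∧ (∃ q : ℚ, (q:ℝ) = x) ∧
      Tendsto (fun n => pPre b n x) atTop (nhds 0)} with hS
  have hub : ∀ b, ∀ x ∈ S b, x ≤ 1 := by
    intro b x hx
    rcases hx with rfl | hx
    · exact zero_le_one
    · exact hx.1.2
  have hbdd : ∀ b, BddAbove (S b) := fun b => ⟨1, fun x hx => hub b x hx⟩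
  have hne : ∀ b, (S b).Nonempty := fun b => ⟨0, mem_insert _ _⟩
  have hθ0 : ∀ b, 0 ≤ sSup (S b) := fun b => le_csSup (hbdd b) (mem_insert _ _)
  have hθ1 : ∀ b, sSup (S b) ≤ 1 := fun b => csSup_le (hne b) (hub b)
  set good : (ℕ → Bool) → Prop := fun b => ∀ q : ℚ, (q:ℝ) ∈ Icc (0:ℝ) 1 →
    (Tendsto (fun n => pPre b n (q:ℝ)) atTop (nhds 0)
      ∨ Tendsto (fun n => pPre b n (q:ℝ)) atTop (nhds 1)) with hgood_def
  have hG : ∀ᵐ b ∂P, good b := by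
    rw [ae_all_iff]
    intro q
    by_cases hq : (q:ℝ) ∈ Icc (0:ℝ) 1
    · filter_upwards [ae_dichotomy P hP hq] with b h _
      exact h
    · exact ae_of_all _ (fun b h => absurd h hq)
  have claim1 : ∀ b, ∀ z ∈ Ico (0:ℝ) (sSup (S b)),
      Tendsto (fun n => pPre b n z) atTop (nhds 0) := by
    intro b z hz
    obtain ⟨hz0, hzθ⟩ := hz
    obtain ⟨x, hxS, hzx⟩ := exists_lt_of_lt_csSup (hne b) hzθ
    rcases hxS with rfl | ⟨hxI, ⟨q, hq⟩, hx0⟩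
    · linarith
    have hz1 : z ≤ 1 := le_trans hzx.le hxI.2
    exact tendsto_of_tendsto_of_tendsto_of_le_of_le tendsto_const_nhds hx0
      (fun n => (pPre_mem ⟨hz0, hz1⟩ n).1) (fun n => pPre_mono hz0 hzx.le hxI.2 n)
  have claim2 : ∀ b, good b → ∀ z ∈ Ioc (sSup (S b)) (1:ℝ),
      Tendsto (fun n => pPre b n z) atTop (nhds 1) := by
    intro b hg z hz
    obtain ⟨hθz, hz1⟩ := hz
    obtain ⟨q, hq1, hq2⟩ := exists_rat_btwn hθz
    have hqI : (q:ℝ) ∈ Icc (0:ℝ) 1 := ⟨le_trans (hθ0 b) hq1.le, le_trans hq2.le hz1⟩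
    rcases hg q hqI with h0 | h1
    · exfalso
      have hmem : (q:ℝ) ∈ S b := Set.mem_insert_iff.2 (Or.inr ⟨hqI, ⟨q, rfl⟩, h0⟩)
      exact absurd (le_csSup (hbdd b) hmem) (not_le.2 hq1)
    · exact tendsto_of_tendsto_of_tendsto_of_le_of_le h1 tendsto_const_nhds
        (fun n => pPre_mono hqI.1 hq2.le hz1 n)
        (fun n => (pPre_mem ⟨le_trans hqI.1 hq2.le, hz1⟩ n).2)
  refine ⟨fun b => sSup (S b), fun b => ⟨hθ0 b, hθ1 b⟩, ?_, ?_⟩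
  · filter_upwards [hG] with b hb
    exact ⟨claim1 b, claim2 b hb⟩
  · intro t ht
    obtain ⟨ht0, ht1⟩ := ht
    have hup : ∀ q : ℚ, t < (q:ℝ) → (q:ℝ) ≤ 1 →
        P {b : ℕ → Bool | sSup (S b) ≤ t} ≤ ENNReal.ofReal (q:ℝ) := by
      intro q hq1 hq2
      have hqI : (q:ℝ) ∈ Icc (0:ℝ) 1 := ⟨le_trans ht0 hq1.le, hq2⟩
      rw [← P_Aset P hP hqI]
      apply measure_mono_ae
      filter_upwards [hG] with b hb hbt
      exact claim2 b hb (q:ℝ) ⟨lt_of_le_of_lt hbt hq1, hq2⟩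
    have hlow : ∀ r : ℚ, 0 ≤ (r:ℝ) → (r:ℝ) ≤ t →
        ENNReal.ofReal (r:ℝ) ≤ P {b : ℕ → Bool | sSup (S b) ≤ t} := by
      intro r hr0 hrt
      have hrI : (r:ℝ) ∈ Icc (0:ℝ) 1 := ⟨hr0, le_trans hrt ht1⟩
      rw [← P_Aset P hP hrI]
      apply measure_mono
      intro b hb1
      by_contra hbt
      have hbt' : t < sSup (S b) := not_le.1 hbt
      have hlt : (r:ℝ) < sSup (S b) := lt_of_le_of_lt hrt hbt'
      have h0 := claim1 b (r:ℝ) ⟨hr0, hlt⟩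
      exact absurd (tendsto_nhds_unique hb1 h0) one_ne_zero
    set m := P {b : ℕ → Bool | sSup (S b) ≤ t} with hm
    have hm1 : m ≤ 1 := prob_le_one
    have hmt : m ≠ ⊤ := measure_ne_top P _
    have hup' : ∀ q : ℚ, t < (q:ℝ) → (q:ℝ) ≤ 1 → m.toReal ≤ (q:ℝ) := by
      intro q h1 h2
      have h3 := ENNReal.toReal_mono ENNReal.ofReal_ne_top (hup q h1 h2)
      rwa [ENNReal.toReal_ofReal (le_trans ht0 h1.le)] at h3
    have hlow' : ∀ r : ℚ, 0 ≤ (r:ℝ) → (r:ℝ) ≤ t → (r:ℝ) ≤ m.toReal := by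
      intro r h1 h2
      have h3 := ENNReal.toReal_mono hmt (hlow r h1 h2)
      rwa [ENNReal.toReal_ofReal h1] at h3
    have hmr1 : m.toReal ≤ 1 := by
      have := ENNReal.toReal_mono (by norm_num : (1:ENNReal) ≠ ⊤) hm1
      simpa using this
    have heq : m.toReal = t := by
      apply le_antisymm
      · by_contra h
        push_neg at h
        obtain ⟨q, hq1, hq2⟩ := exists_rat_btwn h
        exact absurd (hup' q hq1 (le_trans hq2.le hmr1)) (not_le.2 hq2)
      · by_contra h
        push_neg at h
        obtain ⟨r, hr1, hr2⟩ := exists_rat_btwn h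
        exact absurd (hlow' r (le_trans ENNReal.toReal_nonneg hr1.le) hr2.le) (not_le.2 hr1)
    rw [← heq, ENNReal.ofReal_toReal hmt]
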